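/- Let G be a finite abelian group, c > 0, and f : G → ℂ a function with ‖f‖₂ ≤ 1 (where ‖f‖₂² = E_x |f(x)|²) and ‖f‖_{U²} ≥ c. Then there exists a character ψ of G such that |E_x f(x) conj(ψ(x))| ≥ c². -/

import Mathlib

open Finset

section aux
variable {G : Type*} [AddCommGroup G] [Fintype G]

private lemma char_prod (ψ : AddChar G ℂ) (x w y z : G) :
    ψ x * ψ w * (starRingEnd ℂ) (ψ y) * (starRingEnd ℂ) (ψ z) = ψ (x + w - y - z) := by
  rw [← AddChar.inv_apply_eq_conj, ← AddChar.inv_apply_eq_conj, ← AddChar.map_neg_eq_inv,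
    ← AddChar.map_neg_eq_inv, ← AddChar.map_add_eq_mul, ← AddChar.map_add_eq_mul,
    ← AddChar.map_add_eq_mul]
  congr 1
  abel

private lemma char_parseval (f : G → ℂ) :
    ∑ ψ : AddChar G ℂ, (∑ x : G, f x * ψ x) * (starRingEnd ℂ) (∑ x : G, f x * ψ x)
      = (Fintype.card G : ℂ) * ∑ x : G, f x * (starRingEnd ℂ) (f x) := by
  classical
  have h : ∀ ψ : AddChar G ℂ,
      (∑ x : G, f x * ψ x) * (starRingEnd ℂ) (∑ x : G, f x * ψ x)
        = ∑ x : G, ∑ y : G, f x * (starRingEnd ℂ) (f y) * ψ (x - y) := by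
    intro ψ
    rw [map_sum, Finset.sum_mul_sum]
    refine Finset.sum_congr rfl fun x _ => Finset.sum_congr rfl fun y _ => ?_
    rw [map_mul, ← AddChar.inv_apply_eq_conj, ← AddChar.map_neg_eq_inv, sub_eq_add_neg,
      AddChar.map_add_eq_mul]
    ring
  calc ∑ ψ : AddChar G ℂ, (∑ x : G, f x * ψ x) * (starRingEnd ℂ) (∑ x : G, f x * ψ x)
      = ∑ ψ : AddChar G ℂ, ∑ x : G, ∑ y : G, f x * (starRingEnd ℂ) (f y) * ψ (x - y) :=
        Finset.sum_congr rfl fun ψ _ => h ψ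
    _ = ∑ x : G, ∑ y : G, ∑ ψ : AddChar G ℂ, f x * (starRingEnd ℂ) (f y) * ψ (x - y) := by
        rw [Finset.sum_comm]
        exact Finset.sum_congr rfl fun x _ => Finset.sum_comm
    _ = ∑ x : G, ∑ y : G, f x * (starRingEnd ℂ) (f y) *
          (if x - y = 0 then (Fintype.card G : ℂ) else 0) := by
        simp_rw [← Finset.mul_sum, AddChar.sum_apply_eq_ite]
    _ = (Fintype.card G : ℂ) * ∑ x : G, f x * (starRingEnd ℂ) (f x) := by
        simp_rw [sub_eq_zero, mul_ite, mul_zero, Finset.sum_ite_eq, Finset.mem_univ, if_true]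
        rw [Finset.mul_sum]
        exact Finset.sum_congr rfl fun x _ => by ring

end aux

section aux2
variable {G : Type*} [AddCommGroup G] [Fintype G]

private lemma triple_reindex (f : G → ℂ) :
    ∑ x : G, ∑ a : G, ∑ b : G,
        f x * (starRingEnd ℂ) (f (x + a)) * (starRingEnd ℂ) (f (x + b)) * f (x + a + b)
      = ∑ x : G, ∑ y : G, ∑ z : G,
        f x * (starRingEnd ℂ) (f y) * (starRingEnd ℂ) (f z) * f (y + z - x) := by
  refine Finset.sum_congr rfl fun x _ => ?_
  refine Fintype.sum_equiv (Equiv.addLeft x) _ _ fun a => ?_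
  refine Fintype.sum_equiv (Equiv.addLeft x) _ _ fun b => ?_
  simp only [Equiv.coe_addLeft]
  have h1 : x + a + (x + b) - x = x + a + b := by abel
  rw [h1]

private lemma char_u2 (f : G → ℂ) :
    ∑ ψ : AddChar G ℂ, ((∑ x : G, f x * ψ x) * (∑ x : G, f x * ψ x) *
        (starRingEnd ℂ) (∑ x : G, f x * ψ x) * (starRingEnd ℂ) (∑ x : G, f x * ψ x))
      = (Fintype.card G : ℂ) * ∑ x : G, ∑ y : G, ∑ z : G,
        f x * (starRingEnd ℂ) (f y) * (starRingEnd ℂ) (f z) * f (y + z - x) := by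
  classical
  have hcond : ∀ x w y z : G, (y + z - x - w = 0) ↔ (x + w - y = z) := by
    intro x w y z
    have h1 : y + z - x - w = z - (x + w - y) := by abel
    rw [h1, sub_eq_zero, eq_comm]
  have h : ∀ ψ : AddChar G ℂ,
      (∑ x : G, f x * ψ x) * (∑ x : G, f x * ψ x) *
        (starRingEnd ℂ) (∑ x : G, f x * ψ x) * (starRingEnd ℂ) (∑ x : G, f x * ψ x)
      = ∑ x : G, ∑ w : G, ∑ y : G, ∑ z : G,
          f y * f z * (starRingEnd ℂ) (f x) * (starRingEnd ℂ) (f w) * ψ (y + z - x - w) := by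
    intro ψ
    rw [map_sum]
    simp only [Finset.sum_mul, Finset.mul_sum, map_mul]
    refine Finset.sum_congr rfl fun x _ => Finset.sum_congr rfl fun w _ =>
      Finset.sum_congr rfl fun y _ => Finset.sum_congr rfl fun z _ => ?_
    rw [← char_prod ψ y z x w]
    ring
  calc ∑ ψ : AddChar G ℂ, ((∑ x : G, f x * ψ x) * (∑ x : G, f x * ψ x) *
        (starRingEnd ℂ) (∑ x : G, f x * ψ x) * (starRingEnd ℂ) (∑ x : G, f x * ψ x))
      = ∑ x : G, ∑ w : G, ∑ y : G, ∑ z : G, ∑ ψ : AddChar G ℂ,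
          f y * f z * (starRingEnd ℂ) (f x) * (starRingEnd ℂ) (f w) * ψ (y + z - x - w) := by
        rw [Finset.sum_congr rfl fun ψ _ => h ψ, Finset.sum_comm]
        refine Finset.sum_congr rfl fun x _ => ?_
        rw [Finset.sum_comm]
        refine Finset.sum_congr rfl fun w _ => ?_
        rw [Finset.sum_comm]
        refine Finset.sum_congr rfl fun y _ => ?_
        rw [Finset.sum_comm]
    _ = ∑ x : G, ∑ w : G, ∑ y : G, ∑ z : G,
          f y * f z * (starRingEnd ℂ) (f x) * (starRingEnd ℂ) (f w) *
            (if x + w - y = z then (Fintype.card G : ℂ) else 0) := by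
        simp_rw [← Finset.mul_sum, AddChar.sum_apply_eq_ite, hcond]
    _ = ∑ x : G, ∑ w : G, ∑ y : G,
          f y * f (x + w - y) * (starRingEnd ℂ) (f x) * (starRingEnd ℂ) (f w) *
            (Fintype.card G : ℂ) := by
        simp_rw [mul_ite, mul_zero, Finset.sum_ite_eq, Finset.mem_univ, if_true]
    _ = (Fintype.card G : ℂ) * ∑ x : G, ∑ y : G, ∑ z : G,
        f x * (starRingEnd ℂ) (f y) * (starRingEnd ℂ) (f z) * f (y + z - x) := by
        rw [Finset.mul_sum]
        rw [Finset.sum_congr rfl fun (x : G) (_ : x ∈ univ) =>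
          (Finset.sum_comm : (∑ w : G, ∑ y : G, f y * f (x + w - y) * (starRingEnd ℂ) (f x) *
            (starRingEnd ℂ) (f w) * (Fintype.card G : ℂ)) = _), Finset.sum_comm]
        refine Finset.sum_congr rfl fun y _ => ?_
        rw [Finset.mul_sum]
        refine Finset.sum_congr rfl fun x _ => ?_
        rw [Finset.mul_sum]
        refine Finset.sum_congr rfl fun w _ => ?_
        ring

end aux2

theorem u2_inverse
    {G : Type*} [AddCommGroup G] [Fintype G] (c : ℝ) (hc : 0 < c) (f : G → ℂ)
    (hl2 : (∑ x : G, ‖f x‖ ^ 2) / (Fintype.card G : ℝ) ≤ 1)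
    (hu2 : c ^ 4 ≤ (((∑ x : G, ∑ a : G, ∑ b : G,
        f x * (starRingEnd ℂ) (f (x + a)) * (starRingEnd ℂ) (f (x + b)) * f (x + a + b)) /
      ((Fintype.card G : ℂ)) ^ 3).re)) :
    ∃ ψ : G → ℂ, (∀ x y : G, ψ (x + y) = ψ x * ψ y) ∧ (∀ x : G, ‖ψ x‖ = 1) ∧
      c ^ 2 ≤ ‖(∑ x : G, f x * (starRingEnd ℂ) (ψ x)) / (Fintype.card G : ℂ)‖ := by
  classical
  set N : ℕ := Fintype.card G with hNdef
  have hN : 0 < N := Fintype.card_pos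
  have hNR : (0 : ℝ) < (N : ℝ) := by exact_mod_cast hN
  have hNne : (N : ℂ) ≠ 0 := Nat.cast_ne_zero.2 hN.ne'
  set S : AddChar G ℂ → ℂ := fun ψ => ∑ x : G, f x * ψ x with hS
  set A : ℝ := ∑ ψ : AddChar G ℂ, ‖S ψ‖ ^ 4 with hA
  set B : ℝ := ∑ ψ : AddChar G ℂ, ‖S ψ‖ ^ 2 with hB
  set C : ℝ := ∑ x : G, ‖f x‖ ^ 2 with hC
  have habs4 : ∀ ψ : AddChar G ℂ,
      S ψ * S ψ * (starRingEnd ℂ) (S ψ) * (starRingEnd ℂ) (S ψ)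
        = ((‖S ψ‖ ^ 4 : ℝ) : ℂ) := by
    intro ψ
    have h1 : S ψ * S ψ * (starRingEnd ℂ) (S ψ) * (starRingEnd ℂ) (S ψ)
        = (S ψ * (starRingEnd ℂ) (S ψ)) ^ 2 := by ring
    rw [h1, Complex.mul_conj, ← Complex.sq_norm]
    push_cast
    ring
  have hkey : ((A : ℝ) : ℂ) = (N : ℂ) * ((∑ x : G, ∑ a : G, ∑ b : G,
      f x * (starRingEnd ℂ) (f (x + a)) * (starRingEnd ℂ) (f (x + b)) * f (x + a + b))) := by
    rw [hA, Complex.ofReal_sum, ← Finset.sum_congr rfl fun ψ _ => habs4 ψ,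
      triple_reindex f, char_u2 f]
  have habs2 : ∀ ψ : AddChar G ℂ, S ψ * (starRingEnd ℂ) (S ψ)
      = ((‖S ψ‖ ^ 2 : ℝ) : ℂ) := fun ψ => by
    rw [Complex.mul_conj, ← Complex.sq_norm]
  have habsf : ∀ x : G, f x * (starRingEnd ℂ) (f x)
      = ((‖f x‖ ^ 2 : ℝ) : ℂ) := fun x => by
    rw [Complex.mul_conj, ← Complex.sq_norm]
  have hpars : B = (N : ℝ) * C := by
    have h1 : ((B : ℝ) : ℂ) = (N : ℂ) * ((C : ℝ) : ℂ) := by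
      rw [hB, hC, Complex.ofReal_sum, Complex.ofReal_sum,
        ← Finset.sum_congr rfl fun ψ _ => habs2 ψ, char_parseval f,
        ← Finset.sum_congr rfl fun x _ => habsf x]
    exact_mod_cast h1
  have hre : (((∑ x : G, ∑ a : G, ∑ b : G,
        f x * (starRingEnd ℂ) (f (x + a)) * (starRingEnd ℂ) (f (x + b)) * f (x + a + b)) /
      ((N : ℂ)) ^ 3).re) = A / (N : ℝ) ^ 4 := by
    have htriple : (∑ x : G, ∑ a : G, ∑ b : G,
        f x * (starRingEnd ℂ) (f (x + a)) * (starRingEnd ℂ) (f (x + b)) * f (x + a + b))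
        = ((A : ℝ) : ℂ) / (N : ℂ) := by
      rw [eq_div_iff hNne]
      linear_combination -hkey
    rw [htriple, div_div,
      show ((N : ℂ)) * ((N : ℂ)) ^ 3 = (((N : ℝ) ^ 4 : ℝ) : ℂ) by push_cast; ring,
      ← Complex.ofReal_div, Complex.ofReal_re]
  rw [hre] at hu2
  -- choose the maximizing character
  obtain ⟨ψ₀, -, hmax⟩ := Finset.exists_max_image (Finset.univ : Finset (AddChar G ℂ))
    (fun ψ => ‖S ψ‖) ⟨1, Finset.mem_univ 1⟩
  set M : ℝ := ‖S ψ₀‖ with hM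
  have hM0 : 0 ≤ M := norm_nonneg _
  have hA_le : A ≤ M ^ 2 * B := by
    rw [hA, hB, Finset.mul_sum]
    refine Finset.sum_le_sum fun ψ _ => ?_
    have h1 := hmax ψ (Finset.mem_univ ψ)
    have h0 := norm_nonneg (S ψ)
    nlinarith [mul_le_mul_of_nonneg_right (mul_le_mul h1 h1 h0 hM0)
      (mul_nonneg h0 h0)]
  have hC_le : C ≤ (N : ℝ) := (div_le_one hNR).mp hl2
  have hB_le : B ≤ (N : ℝ) ^ 2 := by
    rw [hpars]
    nlinarith [mul_le_mul_of_nonneg_left hC_le hNR.le]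
  have hMN : c ^ 2 ≤ M / (N : ℝ) := by
    have h2 : A ≤ M ^ 2 * (N : ℝ) ^ 2 := by
      nlinarith [mul_le_mul_of_nonneg_left hB_le (sq_nonneg M)]
    have h3 : A / (N : ℝ) ^ 4 ≤ (M / (N : ℝ)) ^ 2 := by
      rw [div_pow, div_le_div_iff₀ (by positivity) (by positivity)]
      nlinarith [sq_nonneg ((N : ℝ) ^ 2)]
    have h1 : c ^ 4 ≤ (M / (N : ℝ)) ^ 2 := le_trans hu2 h3
    nlinarith [sq_nonneg (c ^ 2 - M / (N : ℝ)), sq_nonneg (c ^ 2 + M / (N : ℝ)),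
      div_nonneg hM0 hNR.le]
  refine ⟨fun x => (starRingEnd ℂ) (ψ₀ x), fun x y => by
      simp [AddChar.map_add_eq_mul], fun x => by
      rw [Complex.norm_conj, AddChar.norm_apply], ?_⟩
  have hcorr : (∑ x : G, f x * (starRingEnd ℂ) ((starRingEnd ℂ) (ψ₀ x))) = S ψ₀ := by
    simp [hS, Complex.conj_conj]
  rw [hcorr, norm_div, Complex.norm_natCast]
  exact hMN
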